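/- arXiv:1408.1687 — 5 statements merged into one kernel-verified Lean document; each statement's English description precedes it below -/
import Mathlib

section
/- Let R be a ring in which 2 is invertible, and suppose a - a³ = (a - a³)s(a - a³) for some s ∈ R. Then c = 1 + a is regular; explicitly c = czc where z = 3/2 - c/2 + (1-c)(1-c/2)(-2s)(1-c)(1-c/2). -/
noncomputable section

namespace SepExchange

variable (R : Type) [Ring R]

/-- The right annihilator `r(a)` as a right `R`-submodule of `R`. -/
def rAnn (a : R) : Submodule Rᵐᵒᵖ R where
  carrier := {x | a * x = 0}
  add_mem' := by intro x y hx hy; simp_all [Set.mem_setOf_eq, mul_add]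
  zero_mem' := by simp
  smul_mem' := by
    intro c x hx
    simp only [Set.mem_setOf_eq, MulOpposite.smul_eq_mul_unop] at *
    rw [← mul_assoc, hx, zero_mul]

/-- The principal right ideal `aR` as a right `R`-submodule of `R`. -/
def rIdeal (a : R) : Submodule Rᵐᵒᵖ R := Submodule.span Rᵐᵒᵖ {a}

/-- The right `R`-module `a·r(a²) = {a*t : a²*t = 0}`. -/
def arAnn2 (a : R) : Submodule Rᵐᵒᵖ R where
  carrier := {x | ∃ t, x = a * t ∧ a ^ 2 * t = 0}
  add_mem' := by
    rintro x y ⟨t1, rfl, h1⟩ ⟨t2, rfl, h2⟩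
    exact ⟨t1 + t2, by rw [mul_add], by rw [mul_add, h1, h2, add_zero]⟩
  zero_mem' := ⟨0, by simp, by simp⟩
  smul_mem' := by
    rintro c x ⟨t, rfl, ht⟩
    refine ⟨t * c.unop, ?_, ?_⟩
    · simp only [MulOpposite.smul_eq_mul_unop, MulOpposite.unop_op, mul_assoc]
    · rw [← mul_assoc, ht, zero_mul]

/-- `R` is an exchange ring: for each `a` there is an idempotent `e ∈ aR`
with `1 - e ∈ (1-a)R`. -/
def ExchangeRing : Prop :=
  ∀ a : R, ∃ e : R, IsIdempotentElem e ∧ (∃ r, e = a * r) ∧ (∃ s, (1 : R) - e = (1 - a) * s)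

/-- `R` is separative: `A⊕A ≅ A⊕B ≅ B⊕B ⟹ A ≅ B` for finitely generated
projective right `R`-modules. -/
def Separative : Prop :=
  ∀ (A B : Type) [AddCommGroup A] [Module Rᵐᵒᵖ A] [AddCommGroup B] [Module Rᵐᵒᵖ B],
    Module.Finite Rᵐᵒᵖ A → Module.Projective Rᵐᵒᵖ A →
    Module.Finite Rᵐᵒᵖ B → Module.Projective Rᵐᵒᵖ B →
    Nonempty ((A × A) ≃ₗ[Rᵐᵒᵖ] (A × B)) → Nonempty ((A × B) ≃ₗ[Rᵐᵒᵖ] (B × B)) →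
    Nonempty (A ≃ₗ[Rᵐᵒᵖ] B)

/-- `a` is unit-regular. -/
def IsUnitRegular (a : R) : Prop := ∃ u : Rˣ, a = a * (u : R) * a

/-- `a` is special clean: there is an idempotent `e` with `a - e` a unit and
`aR ∩ eR = 0`. -/
def IsSpecialClean (a : R) : Prop :=
  ∃ e : R, IsIdempotentElem e ∧ IsUnit (a - e) ∧ rIdeal R a ⊓ rIdeal R e = ⊥

/-- `A ≲⊕ B`: `A` is isomorphic to a direct summand of `B` (right `R`-modules). -/
def SummandOf (A B : Type) [AddCommGroup A] [Module Rᵐᵒᵖ A]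
    [AddCommGroup B] [Module Rᵐᵒᵖ B] : Prop :=
  ∃ N N' : Submodule Rᵐᵒᵖ B, IsCompl N N' ∧ Nonempty (A ≃ₗ[Rᵐᵒᵖ] ↥N)

/-- `A ∝ B`: `A` is isomorphic to a direct summand of a finite direct sum of
copies of `B`. -/
def Propto (A B : Type) [AddCommGroup A] [Module Rᵐᵒᵖ A]
    [AddCommGroup B] [Module Rᵐᵒᵖ B] : Prop :=
  ∃ m : ℕ, 0 < m ∧ SummandOf R A (Fin m → B)

end SepExchange

open SepExchange in
/-- If `2` is invertible and `a - a³` is regular with inner inverse `s`, then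
`c = 1 + a` is regular with inner inverse
`3/2 - c/2 + (1-c)(1-c/2)(-2s)(1-c)(1-c/2)`. -/
theorem stmt2 (R : Type) [Ring R] [Invertible (2 : R)] (a s : R)
    (h : a - a ^ 3 = (a - a ^ 3) * s * (a - a ^ 3)) (c : R) (hc : c = 1 + a) :
    c = c * ((3 : R) * ⅟(2 : R) - c * ⅟(2 : R) +
      (1 - c) * (1 - c * ⅟(2 : R)) * (-(2 * s)) * (1 - c) * (1 - c * ⅟(2 : R))) * c := by
  
  subst hc
  set t := ⅟(2:R) with htdef
  have ht : (2:R) * t = 1 := mul_invOf_self 2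
  have ht' : t * (2:R) = 1 := invOf_mul_self 2
  have hcomm : ∀ x : R, t * x = x * t := fun x =>
    ((Commute.ofNat_right x 2).invOf_right).symm.eq
  have r1 : (1:R) - (1+a) = -a := by abel
  have r2 : (1:R) - (1+a)*t = (1-a)*t := by
    have e : ((2:R)-(1+a))*t = (1-a)*t := by
      rw [show (2:R)-(1+a) = 1-a by
        rw [show (2:R) = 1+1 from one_add_one_eq_two.symm]; abel]
    rw [← e, sub_mul, ht]
  have r3 : (3:R)*t - (1+a)*t = (2-a)*t := by
    rw [← sub_mul, show (3:R)-(1+a) = 2-a by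
      rw [show (3:R) = 2+1 from two_add_one_eq_three.symm,
          show (2:R) = 1+1 from one_add_one_eq_two.symm]; abel]
  rw [r3, r2, r1]
  have r4' : t * (-(2*s)) = -s := by rw [mul_neg, ← mul_assoc, ht', one_mul]
  have r5 : (-a) * ((1-a)*t) * (-(2*s)) = (-a) * ((1-a) * (-s)) := by
    rw [mul_assoc, mul_assoc, r4']
  rw [r5]
  have r6 : -a * ((1 - a) * -s) * -a * ((1 - a) * t)
      = (-a * ((1 - a) * -s) * -a * (1 - a)) * t := by
    rw [← mul_assoc]
  rw [r6, ← add_mul]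
  set N := (2-a) + -a * ((1 - a) * -s) * -a * (1 - a) with hN
  have r7 : (1+a) * (N*t) * (1+a) = ((1+a) * N * (1+a)) * t := by
    rw [← mul_assoc, mul_assoc ((1+a)*N) t (1+a), hcomm, ← mul_assoc]
  rw [r7]
  have key : (1+a) * N * (1+a) = 2 + 2*a := by
    have e : (1+a) * N * (1+a) = (2+3*a-a^3) - ((a-a^3)*s*(a-a^3)) := by
      rw [hN]; noncomm_ring; simp [nsmul_eq_mul]; abel
    rw [e, ← h]; noncomm_ring
  rw [key, show (2:R)+2*a = (1+a)*2 by noncomm_ring; simp [nsmul_eq_mul]; abel,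
      mul_assoc, ht, mul_one]
end
end

section
/- Let R be a ring, a ∈ R with a = axa and b = 1 - a with b = byb. Set e = 1 - xa and f = 1 - yb. Then the element g = (1-e)fa(1-e) is an idempotent satisfying eg = ge = 0, and consequently eR + fR = (e+g)R with e+g an idempotent. -/
noncomputable section

open SepExchange in
/-- With `a = axa`, `b = 1 - a = byb`, `e = 1 - xa`, `f = 1 - yb`, the element
`g = (1-e)fa(1-e)` is an idempotent with `eg = ge = 0`, and
`eR + fR = (e+g)R` with `e + g` an idempotent. -/
theorem stmt3 (R : Type) [Ring R] (a x y e f g : R)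
    (ha : a = a * x * a) (hb : (1 - a) = (1 - a) * y * (1 - a))
    (he : e = 1 - x * a) (hf : f = 1 - y * (1 - a))
    (hg : g = (1 - e) * f * a * (1 - e)) :
    IsIdempotentElem g ∧ e * g = 0 ∧ g * e = 0 ∧
      rIdeal R e ⊔ rIdeal R f = rIdeal R (e + g) ∧ IsIdempotentElem (e + g) := by

  have hax : a * (x * a) = a := by rw [← mul_assoc, ← ha]
  have hbyb : (1 - a) * (y * (1 - a)) = 1 - a := by rw [← mul_assoc, ← hb]
  have hae : a * e = 0 := by rw [he, mul_sub, mul_one, ← mul_assoc, ← ha, sub_self]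
  have ha1e : a * (1 - e) = a := by rw [mul_sub, mul_one, hae, sub_zero]
  have hee : e * e = e := by
    rw [he, show (1 - x*a) * (1 - x*a)
        = 1 - x*a - (x*a - x*(a*(x*a))) from by noncomm_ring, hax]
    noncomm_ring
  have hff : f * f = f := by
    rw [hf, show (1 - y*(1-a)) * (1 - y*(1-a))
        = 1 - y*(1-a) - (y*(1-a) - y*((1-a)*(y*(1-a)))) from by noncomm_ring, hbyb]
    noncomm_ring
  have hbf : (1 - a) * f = 0 := by
    rw [hf, show (1-a) * (1 - y*(1-a)) = (1-a) - (1-a)*(y*(1-a)) from by noncomm_ring,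
      hbyb, sub_self]
  have haf : a * f = f := by
    have h : f - a * f = 0 := by rw [show f - a*f = (1-a)*f from by noncomm_ring, hbf]
    rw [sub_eq_zero] at h; exact h.symm
  have he1e : e * (1 - e) = 0 := by rw [mul_sub, mul_one, hee, sub_self]
  have h1ee : (1 - e) * e = 0 := by rw [sub_mul, one_mul, hee, sub_self]
  have h1e1e : (1 - e) * (1 - e) = 1 - e := by rw [mul_sub, mul_one, h1ee, sub_zero]
  have hg' : g = (1 - e) * f * a := by rw [hg, mul_assoc ((1-e)*f) a, ha1e]
  have hg1e : g * (1 - e) = g := by rw [hg, mul_assoc, h1e1e]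
  have hgf : g * f = (1 - e) * f := by
    rw [hg', mul_assoc ((1-e)*f) a f, haf, mul_assoc, hff]
  have hgg : g * g = g := by
    have h : g * g = g * (1 - e) * f * a := by
      nth_rewrite 2 [hg']
      simp only [← mul_assoc]
    rw [h, hg1e, hgf, ← hg']
  have heg : e * g = 0 := by
    rw [hg, ← mul_assoc, ← mul_assoc, ← mul_assoc, he1e, zero_mul, zero_mul, zero_mul]
  have hge : g * e = 0 := by rw [hg', mul_assoc, hae, mul_zero]
  have hsum : e + g = e * (1 - f * a) + f * a := by
    rw [hg', sub_mul, one_mul, mul_sub, mul_one]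
    noncomm_ring
  refine ⟨hgg, heg, hge, ?_, ?_⟩
  · apply le_antisymm
    · apply sup_le
      · rw [rIdeal, Submodule.span_le, Set.singleton_subset_iff, SetLike.mem_coe, rIdeal,
          Submodule.mem_span_singleton]
        exact ⟨MulOpposite.op e, by
          simp only [MulOpposite.smul_eq_mul_unop, MulOpposite.unop_op, add_mul, hee, hge,
            add_zero]⟩
      · rw [rIdeal, Submodule.span_le, Set.singleton_subset_iff, SetLike.mem_coe, rIdeal,
          Submodule.mem_span_singleton]
        refine ⟨MulOpposite.op f, ?_⟩
        simp only [MulOpposite.smul_eq_mul_unop, MulOpposite.unop_op, add_mul, hgf]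
        noncomm_ring
    · rw [rIdeal, Submodule.span_le, Set.singleton_subset_iff, SetLike.mem_coe, hsum]
      apply Submodule.add_mem
      · apply Submodule.mem_sup_left
        rw [rIdeal, Submodule.mem_span_singleton]
        exact ⟨MulOpposite.op (1 - f * a), by
          simp [MulOpposite.smul_eq_mul_unop]⟩
      · apply Submodule.mem_sup_right
        rw [rIdeal, Submodule.mem_span_singleton]
        exact ⟨MulOpposite.op a, by simp [MulOpposite.smul_eq_mul_unop]⟩
  · show (e + g) * (e + g) = e + g
    rw [add_mul, mul_add, mul_add, hee, hgg, heg, hge, add_zero, zero_add]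
end
end

section
/- Let R be a ring, a ∈ R regular with inner inverse x (a = axa), and b = 1 - a regular with inner inverse y. Then r(a) + r(b) is a direct summand of R as a right R-module, where r(·) denotes the right annihilator. -/
noncomputable section

open SepExchange in
/-- If `a` and `b = 1 - a` are both regular, then `r(a) + r(b)` is a direct
summand of `R` as a right `R`-module. -/
theorem stmt4 (R : Type) [Ring R] (a x y : R)
    (ha : a = a * x * a) (hb : (1 - a) = (1 - a) * y * (1 - a)) :
    ∃ C : Submodule Rᵐᵒᵖ R, IsCompl (rAnn R a ⊔ rAnn R (1 - a)) C := by
  obtain ⟨b, hb_def⟩ : ∃ b, b = 1 - a := ⟨_, rfl⟩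
  rw [← hb_def] at hb ⊢
  obtain ⟨g, hg_def⟩ : ∃ g, g = 1 - y * b := ⟨_, rfl⟩
  -- basic identities
  have hbg : b * g = 0 := by
    have h1 : b * g = b - b * y * b := by rw [hg_def]; noncomm_ring
    rw [h1, ← hb, sub_self]
  have hag : a * g = g := by
    have h1 : a * g = g - b * g := by rw [hb_def]; noncomm_ring
    rw [h1, hbg, sub_zero]
  obtain ⟨f, hf_def⟩ : ∃ f, f = x * a := ⟨_, rfl⟩
  have hf : f * f = f := by
    rw [hf_def]
    calc x * a * (x * a) = x * (a * x * a) := by noncomm_ring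
      _ = x * a := by rw [← ha]
  have hg : g * g = g := by
    calc g * g = g - y * (b * g) := by rw [hg_def]; noncomm_ring
      _ = g := by rw [hbg]; noncomm_ring
  obtain ⟨e, he_def⟩ : ∃ e, e = x * a * g * a := ⟨_, rfl⟩
  have hfe : f * e = e := by
    rw [hf_def, he_def]
    calc x * a * (x * a * g * a) = x * (a * x * a) * g * a := by noncomm_ring
      _ = x * a * g * a := by rw [← ha]
  have he : e * e = e := by
    rw [he_def]
    calc x * a * g * a * (x * a * g * a) = x * a * g * (a * x * a) * g * a := by noncomm_ring
      _ = x * a * g * a * g * a := by rw [← ha]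
      _ = x * a * (g * (a * g)) * a := by noncomm_ring
      _ = x * a * (g * g) * a := by rw [hag]
      _ = x * a * g * a := by rw [hg]
  obtain ⟨P, hP_def⟩ : ∃ P, P = 1 - f + e * f := ⟨_, rfl⟩
  have hfef : f * (e * f) = e * f := by rw [← mul_assoc, hfe]
  have heff : e * f * f = e * f := by rw [mul_assoc, hf]
  have hefef : e * f * (e * f) = e * f := by
    rw [mul_assoc e f (e * f), hfef, ← mul_assoc, he]
  have hPP : P * P = P := by
    have expand : P * P =
        1 - f - f + f * f + e * f + e * f - f * (e * f) - e * f * f + e * f * (e * f) := by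
      rw [hP_def]; noncomm_ring
    rw [expand, hf, hfef, heff, hefef, hP_def]
    noncomm_ring
  have mem_rAnn : ∀ (c z : R), z ∈ rAnn R c ↔ c * z = 0 := fun c z => Iff.rfl
  -- (A) membership in the sup implies fixed by P
  have hfix : ∀ z ∈ rAnn R a ⊔ rAnn R b, P * z = z := by
    intro z hz
    rcases Submodule.mem_sup.mp hz with ⟨u, hu, v, hv, rfl⟩
    rw [mem_rAnn] at hu hv
    have hPu : P * u = u := by
      calc P * u = u - x * (a * u) + e * (x * (a * u)) := by
            rw [hP_def, hf_def]; noncomm_ring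
        _ = u := by rw [hu]; simp
    have hav : a * v = v := by
      have h1 : a * v = v - b * v := by rw [hb_def]; noncomm_ring
      rw [h1, hv, sub_zero]
    have hgv : g * v = v := by
      have h1 : g * v = v - y * (b * v) := by rw [hg_def]; noncomm_ring
      rw [h1, hv]; simp
    have hPv : P * v = v := by
      have hefv : e * (f * v) = x * v := by
        rw [he_def, hf_def]
        calc x * a * g * a * (x * a * v) = x * a * g * (a * x * a) * v := by noncomm_ring
          _ = x * a * g * a * v := by rw [← ha]
          _ = x * a * (g * (a * v)) := by noncomm_ring
          _ = x * a * v := by rw [hav, hgv]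
          _ = x * v := by rw [mul_assoc, hav]
      have hfv : f * v = x * v := by rw [hf_def, mul_assoc, hav]
      calc P * v = v - f * v + e * (f * v) := by rw [hP_def]; noncomm_ring
        _ = v := by rw [hefv, hfv]; noncomm_ring
    rw [mul_add, hPu, hPv]
  -- (B) anything fixed by P lies in the sup
  have hmem : ∀ z : R, P * z = z → z ∈ rAnn R a ⊔ rAnn R b := by
    intro z hz
    refine Submodule.mem_sup.mpr
      ⟨(1 - f) * z - (1 - f) * (g * (a * (f * z))), ?_, g * (a * (f * z)), ?_, ?_⟩
    · rw [mem_rAnn]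
      have key : ∀ w : R, a * ((1 - f) * w) = 0 := by
        intro w
        calc a * ((1 - f) * w) = (a - a * x * a) * w := by rw [hf_def]; noncomm_ring
          _ = 0 := by rw [← ha, sub_self, zero_mul]
      rw [mul_sub, key, key, sub_self]
    · rw [mem_rAnn]
      calc b * (g * (a * (f * z))) = (b * g) * (a * (f * z)) := by rw [← mul_assoc]
        _ = 0 := by rw [hbg, zero_mul]
    · calc (1 - f) * z - (1 - f) * (g * (a * (f * z))) + g * (a * (f * z))
          = (1 - f) * z + f * (g * (a * (f * z))) := by noncomm_ring
        _ = P * z := by rw [hP_def, hf_def, he_def]; noncomm_ring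
        _ = z := hz
  refine ⟨rAnn R P, ?_, ?_⟩
  · -- disjoint
    rw [Submodule.disjoint_def]
    intro z hzM hzC
    rw [mem_rAnn] at hzC
    rw [← hfix z hzM, hzC]
  · -- codisjoint
    rw [codisjoint_iff, eq_top_iff]
    intro z _
    have h1 : P * z ∈ rAnn R a ⊔ rAnn R b := by
      apply hmem
      rw [← mul_assoc, hPP]
    have h2 : z - P * z ∈ rAnn R P := by
      rw [mem_rAnn, mul_sub, ← mul_assoc, hPP, sub_self]
    have h3 : z = P * z + (z - P * z) := by abel
    rw [h3]
    exact Submodule.add_mem_sup h1 h2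
end
end

section
/- Let R be an exchange ring in which 2 is invertible and a ∈ R with a - a³ regular. If aR/ar(a²) and R/(aR + r(a)) are projective right R-modules, then (a-a³)R ⊕ ar(a²) ≅ (a-a³)R ⊕ R/(aR + r(a)) as right R-modules. -/
noncomputable section

noncomputable section
namespace Aux14
variable {R : Type} [Ring R]

/-- Left multiplication as a right-module endomorphism. -/
def lmul (c : R) : R →ₗ[Rᵐᵒᵖ] R where
  toFun x := c * x
  map_add' := mul_add c
  map_smul' := fun m x => by
    simp only [MulOpposite.smul_eq_mul_unop, RingHom.id_apply, mul_assoc]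

@[simp] theorem lmul_apply (c x : R) : lmul c x = c * x := rfl

theorem projR (R : Type) [Ring R] : Module.Projective Rᵐᵒᵖ R := by
  refine Module.projective_def.2 ⟨⟨⟨fun x => Finsupp.single 1 (MulOpposite.op x), ?_⟩, ?_⟩, ?_⟩
  · intro x y; simp [MulOpposite.op_add, Finsupp.single_add]
  · intro c x
    simp only [RingHom.id_apply]
    rw [MulOpposite.smul_eq_mul_unop, Finsupp.smul_single]
    rfl
  · intro x
    simp [Finsupp.linearCombination_single, MulOpposite.smul_eq_mul_unop]

theorem mem_rIdeal_iff {c x : R} : x ∈ SepExchange.rIdeal R c ↔ ∃ t, x = c * t := by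
  constructor
  · intro h
    obtain ⟨m, hm⟩ := Submodule.mem_span_singleton.1 h
    exact ⟨m.unop, by rw [← hm, MulOpposite.smul_eq_mul_unop]⟩
  · rintro ⟨t, rfl⟩
    exact Submodule.mem_span_singleton.2
      ⟨MulOpposite.op t, by rw [MulOpposite.smul_eq_mul_unop, MulOpposite.unop_op]⟩

theorem mem_rAnn_iff {c x : R} : x ∈ SepExchange.rAnn R c ↔ c * x = 0 := Iff.rfl

theorem splitEquiv {S M P : Type} [Ring S] [AddCommGroup M] [Module S M]
    [AddCommGroup P] [Module S P] [Module.Projective S P]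
    (f : M →ₗ[S] P) (hf : Function.Surjective f) :
    ∃ _e : M ≃ₗ[S] (↥(LinearMap.ker f) × P), True := by
  obtain ⟨σ, hσ⟩ := Module.projective_lifting_property f LinearMap.id hf
  have hσ' : ∀ p, f (σ p) = p := fun p => congrArg (fun g => g p) hσ
  set F : (↥(LinearMap.ker f) × P) →ₗ[S] M := (LinearMap.ker f).subtype.coprod σ with hF
  have hinj : Function.Injective F := by
    rw [injective_iff_map_eq_zero]
    rintro ⟨⟨k, hk⟩, p⟩ h0
    have h0' : k + σ p = 0 := h0
    have : f (k + σ p) = 0 := by rw [h0', map_zero]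
    rw [map_add, LinearMap.mem_ker.1 hk, zero_add, hσ'] at this
    subst this
    simp only [map_zero, add_zero] at h0'
    subst h0'
    rfl
  have hsurj : Function.Surjective F := by
    intro m
    refine ⟨⟨⟨m - σ (f m), ?_⟩, f m⟩, ?_⟩
    · rw [LinearMap.mem_ker, map_sub, hσ', sub_self]
    · show (m - σ (f m)) + σ (f m) = m
      abel
  exact ⟨(LinearEquiv.ofBijective F ⟨hinj, hsurj⟩).symm, trivial⟩

end Aux14


open SepExchange Aux14 in
/-- Lemma 3.3: in an exchange ring with `2` invertible, if `a - a³` is regular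
and `aR/ar(a²)`, `R/(aR + r(a))` are projective, then
`(a-a³)R ⊕ ar(a²) ≅ (a-a³)R ⊕ R/(aR + r(a))`. -/
theorem stmt14 (R : Type) [Ring R] [Invertible (2 : R)] (hex : ExchangeRing R)
    (a s : R) (h : a - a ^ 3 = (a - a ^ 3) * s * (a - a ^ 3))
    (h1 : Module.Projective Rᵐᵒᵖ
      (↥(rIdeal R a) ⧸ (arAnn2 R a).comap (rIdeal R a).subtype))
    (h2 : Module.Projective Rᵐᵒᵖ (R ⧸ (rIdeal R a ⊔ rAnn R a))) :
    Nonempty ((↥(rIdeal R (a - a ^ 3)) × ↥(arAnn2 R a)) ≃ₗ[Rᵐᵒᵖ]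
      (↥(rIdeal R (a - a ^ 3)) × (R ⧸ (rIdeal R a ⊔ rAnn R a)))) := by
  classical
  set b : R := a - a ^ 3 with hb_def
  set g : R := s * b with hg_def
  set J : Submodule Rᵐᵒᵖ R := rIdeal R a ⊔ rAnn R a with hJ_def
  -- ring identities
  have hbg : b * g = b := by rw [hg_def, ← mul_assoc, ← h]
  have hgg : g * g = g := by
    rw [hg_def, mul_assoc s b (s * b), ← mul_assoc b s b, ← h]
  have hg0 : ∀ x : R, b * x = 0 → g * x = 0 := fun x hx => by
    rw [hg_def, mul_assoc, hx, mul_zero]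
  have hb1g : ∀ x : R, b * ((1 - g) * x) = 0 := fun x => by
    rw [← mul_assoc, mul_sub, mul_one, hbg, sub_self, zero_mul]
  have hannb : ∀ x : R, a * x = 0 → b * x = 0 := fun x hx => by
    have hh : b * x = a * x - a ^ 2 * (a * x) := by rw [hb_def]; noncomm_ring
    rw [hh, hx, mul_zero, sub_zero]
  have hanng : ∀ x : R, a * x = 0 → g * x = 0 := fun x hx => hg0 x (hannb x hx)
  set e₂ : R := (1 - a ^ 2) * (1 - g) with he2_def
  set e₃ : R := a ^ 2 * (1 - g) with he3_def
  have hsum : ∀ x : R, g * x + e₂ * x + e₃ * x = x := by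
    intro x
    have hgsum : g + e₂ + e₃ = 1 := by rw [he2_def, he3_def]; noncomm_ring
    calc g * x + e₂ * x + e₃ * x = (g + e₂ + e₃) * x := by noncomm_ring
      _ = x := by rw [hgsum, one_mul]
  have hae2 : ∀ x : R, a * (e₂ * x) = 0 := fun x => by
    have h1' : a * (e₂ * x) = b * ((1 - g) * x) := by
      rw [he2_def, hb_def]; noncomm_ring
    rw [h1', hb1g]
  have hga1g : ∀ x : R, g * (a * ((1 - g) * x)) = 0 := fun x => by
    apply hg0
    have hh : b * (a * ((1 - g) * x)) = a * (b * ((1 - g) * x)) := by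
      rw [hb_def]; noncomm_ring
    rw [hh, hb1g, mul_zero]
  have he2a1g : ∀ x : R, e₂ * (a * ((1 - g) * x)) = 0 := fun x => by
    have expand : e₂ * (a * ((1 - g) * x)) =
        (1 - a ^ 2) * (a * ((1 - g) * x)) - (1 - a ^ 2) * (g * (a * ((1 - g) * x))) := by
      rw [he2_def]; noncomm_ring
    have hfirst : (1 - a ^ 2) * (a * ((1 - g) * x)) = b * ((1 - g) * x) := by
      rw [hb_def]; noncomm_ring
    rw [expand, hga1g, mul_zero, sub_zero, hfirst, hb1g]
  have he2ann : ∀ x : R, a * x = 0 → e₂ * x = x := fun x hx => by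
    have hh : e₂ * x = x - a * (a * x) - (1 - a ^ 2) * (g * x) := by
      rw [he2_def]; noncomm_ring
    rw [hh, hx, mul_zero, sub_zero, hanng x hx, mul_zero, sub_zero]
  have he3w : ∀ x : R, e₃ * x = a * (a * ((1 - g) * x)) := fun x => by
    rw [he3_def]; noncomm_ring
  -- the submodule G = gR and basic facts
  set G : Submodule Rᵐᵒᵖ R := rIdeal R g with hG_def
  have hretr : ∀ x : R, g * x ∈ G := fun x => mem_rIdeal_iff.2 ⟨x, rfl⟩
  have hGfix : ∀ x : R, x ∈ G → g * x = x := by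
    intro x hx
    obtain ⟨t, rfl⟩ := mem_rIdeal_iff.1 hx
    rw [← mul_assoc, hgg]
  have hprojG : Module.Projective Rᵐᵒᵖ ↥G := by
    have : Module.Projective Rᵐᵒᵖ R := projR R
    refine Module.Projective.of_split G.subtype
      (LinearMap.codRestrict G (lmul g) hretr) ?_
    apply LinearMap.ext; intro x
    exact Subtype.ext (hGfix x x.2)
  -- θ : G → G, x ↦ g * a * x
  have hθmem : ∀ x : ↥G, (lmul (g * a) ∘ₗ G.subtype) x ∈ G :=
    fun x => mem_rIdeal_iff.2 ⟨a * (x : R), mul_assoc _ _ _⟩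
  set θ : ↥G →ₗ[Rᵐᵒᵖ] ↥G := LinearMap.codRestrict G (lmul (g * a) ∘ₗ G.subtype) hθmem
    with hθ_def
  have hθ_apply : ∀ x : ↥G, ((θ x : ↥G) : R) = g * (a * (x : R)) := fun x => mul_assoc g a x
  -- ρ : G → R ⧸ J, identification of the cokernel of θ
  set ρ : ↥G →ₗ[Rᵐᵒᵖ] (R ⧸ J) := J.mkQ ∘ₗ G.subtype with hρ_def
  have hρsurj : Function.Surjective ρ := by
    intro y
    obtain ⟨r, rfl⟩ := J.mkQ_surjective y
    refine ⟨⟨g * r, hretr r⟩, ?_⟩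
    show J.mkQ (g * r) = J.mkQ r
    rw [Submodule.mkQ_apply, Submodule.mkQ_apply, Submodule.Quotient.eq]
    have heq : g * r - r = -(e₂ * r + e₃ * r) := by
      have hh : g * r - r = g * r - (g * r + e₂ * r + e₃ * r) := by rw [hsum r]
      rw [hh]; abel
    rw [heq]
    refine neg_mem (add_mem ?_ ?_)
    · exact le_sup_right (α := Submodule Rᵐᵒᵖ R) (mem_rAnn_iff.2 (hae2 r))
    · exact le_sup_left (α := Submodule Rᵐᵒᵖ R)
        (mem_rIdeal_iff.2 ⟨a * ((1 - g) * r), he3w r⟩)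
  have hkerρ : LinearMap.ker ρ = LinearMap.range θ := by
    ext x
    simp only [LinearMap.mem_ker, LinearMap.mem_range, hρ_def, LinearMap.comp_apply,
      Submodule.subtype_apply, Submodule.mkQ_apply, Submodule.Quotient.mk_eq_zero]
    constructor
    · intro hx
      obtain ⟨yy, hy, z, hz, hyz⟩ := Submodule.mem_sup.1 hx
      obtain ⟨w, rfl⟩ := mem_rIdeal_iff.1 hy
      have hz' : a * z = 0 := mem_rAnn_iff.1 hz
      refine ⟨⟨g * w, hretr w⟩, ?_⟩
      apply Subtype.ext
      show (g * a) * (g * w) = (x : R)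
      have hgw : (g * a) * (g * w) = g * (a * w) - g * (a * ((1 - g) * w)) := by
        noncomm_ring
      calc (g * a) * (g * w) = g * (a * w) - g * (a * ((1 - g) * w)) := hgw
        _ = g * (a * w) := by rw [hga1g, sub_zero]
        _ = g * (a * w + z) := by rw [mul_add, hanng z hz', add_zero]
        _ = g * (x : R) := by rw [hyz]
        _ = (x : R) := hGfix _ x.2
    · rintro ⟨u, rfl⟩
      rw [hθ_apply u]
      set w : R := a * (u : R) with hw
      have t1 : g * w + e₂ * w = w - e₃ * w := eq_sub_of_add_eq (hsum w)
      have t2 : g * w = w - e₃ * w - e₂ * w := eq_sub_of_add_eq t1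
      have hdecomp : g * w = a * ((u : R) - a * ((1 - g) * w)) + -(e₂ * w) := by
        rw [t2, he3w w, mul_sub, ← hw]; abel
      rw [hdecomp]
      refine add_mem ?_ (neg_mem ?_)
      · exact le_sup_left (α := Submodule Rᵐᵒᵖ R) (mem_rIdeal_iff.2 ⟨_, rfl⟩)
      · exact le_sup_right (α := Submodule Rᵐᵒᵖ R) (mem_rAnn_iff.2 (hae2 _))
  have eY : (↥G ⧸ LinearMap.range θ) ≃ₗ[Rᵐᵒᵖ] (R ⧸ J) :=
    (Submodule.quotEquivOfEq _ _ hkerρ.symm).trans (ρ.quotKerEquivOfSurjective hρsurj)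
  -- split G ≅ range θ × (R ⧸ J)
  haveI hprojQ : Module.Projective Rᵐᵒᵖ (↥G ⧸ LinearMap.range θ) :=
    Module.Projective.of_equiv eY.symm
  obtain ⟨e1, -⟩ := splitEquiv (LinearMap.range θ).mkQ (Submodule.mkQ_surjective _)
  have e1' : ↥G ≃ₗ[Rᵐᵒᵖ] (↥(LinearMap.range θ) × (↥G ⧸ LinearMap.range θ)) :=
    e1.trans (LinearEquiv.prodCongr (LinearEquiv.ofEq _ _ (Submodule.ker_mkQ _))
      (LinearEquiv.refl _ _))
  haveI hprojI : Module.Projective Rᵐᵒᵖ ↥(LinearMap.range θ) := by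
    refine Module.Projective.of_split
      (e1'.symm.toLinearMap ∘ₗ LinearMap.inl _ _ _)
      (LinearMap.fst _ _ _ ∘ₗ e1'.toLinearMap) ?_
    apply LinearMap.ext; intro k
    simp
  -- split G ≅ ker θ × range θ
  obtain ⟨e2, -⟩ := splitEquiv (S := Rᵐᵒᵖ) (M := ↥G) (P := ↥(LinearMap.range θ)) θ.rangeRestrict θ.surjective_rangeRestrict
  have e2' : ↥G ≃ₗ[Rᵐᵒᵖ] (↥(LinearMap.ker θ) × ↥(LinearMap.range θ)) :=
    e2.trans (LinearEquiv.prodCongr (LinearEquiv.ofEq _ _ (LinearMap.ker_rangeRestrict θ))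
      (LinearEquiv.refl _ _))
  -- ker θ ≅ arAnn2 a
  have hkerval : ∀ x : ↥(LinearMap.ker θ), g * (a * ((x : ↥G) : R)) = 0 := by
    intro x
    have hx0 : θ (x : ↥G) = 0 := LinearMap.mem_ker.1 x.2
    have hh := congrArg (Subtype.val) hx0
    rw [hθ_apply] at hh
    exact hh
  have hmemκ : ∀ x : ↥(LinearMap.ker θ),
      (lmul e₂ ∘ₗ lmul a ∘ₗ G.subtype ∘ₗ (LinearMap.ker θ).subtype) x ∈ arAnn2 R a := by
    intro x
    show e₂ * (a * ((x : ↥G) : R)) ∈ arAnn2 R a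
    set u : R := ((x : ↥G) : R) with hu
    set w : R := a * u with hw
    have hk : g * w = 0 := hkerval x
    have t1 : e₂ * w = w - e₃ * w - g * w := by
      have t0 : g * w + e₂ * w = w - e₃ * w := eq_sub_of_add_eq (hsum w)
      have t0' : e₂ * w = w - e₃ * w - g * w := eq_sub_of_add_eq' t0
      exact t0'
    have heq : e₂ * w = a * (u - a * ((1 - g) * w)) := by
      rw [t1, hk, sub_zero, he3w w, mul_sub, ← hw]
    refine ⟨u - a * ((1 - g) * w), heq, ?_⟩
    rw [pow_two, mul_assoc, ← heq, hae2]
  set κ : ↥(LinearMap.ker θ) →ₗ[Rᵐᵒᵖ] ↥(arAnn2 R a) :=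
    LinearMap.codRestrict (arAnn2 R a)
      (lmul e₂ ∘ₗ lmul a ∘ₗ G.subtype ∘ₗ (LinearMap.ker θ).subtype) hmemκ with hκ_def
  have hκinj : Function.Injective κ := by
    rw [injective_iff_map_eq_zero]
    intro x hx0
    have hx0' : e₂ * (a * ((x : ↥G) : R)) = 0 := congrArg Subtype.val hx0
    set u : R := ((x : ↥G) : R) with hu
    set w : R := a * u with hw
    have hk : g * w = 0 := hkerval x
    have hau : e₃ * w = w := by
      have := hsum w
      rw [hk, hx0', zero_add, zero_add] at this
      exact this
    have hbu : b * u = 0 := by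
      have h1' : b * u = (1 - a ^ 2) * w := by rw [hb_def, hw, hu]; noncomm_ring
      have h2' : (1 - a ^ 2) * (e₃ * w) = a * (b * ((1 - g) * w)) := by
        rw [he3_def, hb_def]; noncomm_ring
      rw [h1', ← hau, h2', hb1g, mul_zero]
    have hu0 : u = 0 := by
      have hfix := hGfix u (x : ↥G).2
      rw [hg0 u hbu] at hfix
      exact hfix.symm
    apply Subtype.ext; apply Subtype.ext
    exact hu0
  have hκsurj : Function.Surjective κ := by
    rintro ⟨z, t, hz1, hz2⟩
    have haz : a * z = 0 := by rw [hz1, ← mul_assoc, ← pow_two]; exact hz2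
    have hker1 : g * (a * (g * t)) = 0 := by
      have hsplit : a * (g * t) = a * t - a * ((1 - g) * t) := by noncomm_ring
      rw [hsplit, mul_sub, hga1g, sub_zero, ← hz1, hanng z haz]
    have hmemG : g * t ∈ G := hretr t
    have hxker : (⟨g * t, hmemG⟩ : ↥G) ∈ LinearMap.ker θ := by
      rw [LinearMap.mem_ker]
      apply Subtype.ext
      rw [hθ_apply]
      exact hker1
    refine ⟨⟨⟨g * t, hmemG⟩, hxker⟩, ?_⟩
    apply Subtype.ext
    show e₂ * (a * (g * t)) = z
    have hsplit : a * (g * t) = a * t - a * ((1 - g) * t) := by noncomm_ring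
    rw [hsplit, mul_sub, he2a1g, sub_zero, ← hz1, he2ann z haz]
  have eκ : ↥(LinearMap.ker θ) ≃ₗ[Rᵐᵒᵖ] ↥(arAnn2 R a) :=
    LinearEquiv.ofBijective κ ⟨hκinj, hκsurj⟩
  -- bR ≅ G
  have hmemB : ∀ x : ↥G, (lmul b ∘ₗ G.subtype) x ∈ rIdeal R b :=
    fun x => mem_rIdeal_iff.2 ⟨(x : R), rfl⟩
  set φ : ↥G →ₗ[Rᵐᵒᵖ] ↥(rIdeal R b) :=
    LinearMap.codRestrict (rIdeal R b) (lmul b ∘ₗ G.subtype) hmemB with hφ_def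
  have hφinj : Function.Injective φ := by
    rw [injective_iff_map_eq_zero]
    intro x hx0
    have hx0' : b * (x : R) = 0 := congrArg Subtype.val hx0
    have hfix := hGfix (x : R) x.2
    rw [hg0 _ hx0'] at hfix
    exact Subtype.ext hfix.symm
  have hφsurj : Function.Surjective φ := by
    rintro ⟨y, hy⟩
    obtain ⟨c, rfl⟩ := mem_rIdeal_iff.1 hy
    refine ⟨⟨g * c, hretr c⟩, ?_⟩
    apply Subtype.ext
    show b * (g * c) = b * c
    rw [← mul_assoc, hbg]
  have eB : ↥G ≃ₗ[Rᵐᵒᵖ] ↥(rIdeal R b) := LinearEquiv.ofBijective φ ⟨hφinj, hφsurj⟩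
  -- assemble
  set I := LinearMap.range θ with hI_def
  set X := ↥(arAnn2 R a) with hX_def
  set Y := R ⧸ J with hY_def
  have eq1 : ↥G ≃ₗ[Rᵐᵒᵖ] (↥I × Y) :=
    e1'.trans (LinearEquiv.prodCongr (LinearEquiv.refl _ _) eY)
  have eq2 : ↥G ≃ₗ[Rᵐᵒᵖ] (X × ↥I) :=
    e2'.trans (LinearEquiv.prodCongr eκ (LinearEquiv.refl _ _))
  refine ⟨?_⟩
  exact ((LinearEquiv.prodCongr eB.symm (LinearEquiv.refl Rᵐᵒᵖ X)).trans
    ((LinearEquiv.prodCongr eq1 (LinearEquiv.refl Rᵐᵒᵖ X)).trans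
    ((LinearEquiv.prodAssoc Rᵐᵒᵖ (↥I) Y X).trans
    ((LinearEquiv.prodCongr (LinearEquiv.refl Rᵐᵒᵖ (↥I)) (LinearEquiv.prodComm Rᵐᵒᵖ Y X)).trans
    ((LinearEquiv.prodAssoc Rᵐᵒᵖ (↥I) X Y).symm.trans
    ((LinearEquiv.prodCongr (LinearEquiv.prodComm Rᵐᵒᵖ (↥I) X) (LinearEquiv.refl Rᵐᵒᵖ Y)).trans
    ((LinearEquiv.prodCongr eq2.symm (LinearEquiv.refl Rᵐᵒᵖ Y)).trans
    (LinearEquiv.prodCongr eB (LinearEquiv.refl Rᵐᵒᵖ Y)))))))))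
end
end
end

section
/- Let V be an infinite-dimensional vector space over the field ℤ/3ℤ, R = M₃(End(V)), and a ∈ R the 3×3 matrix with a₁₂ = 1, a₃₃ = 1 and all other entries 0. Then a² = a³, and Rar(a²) = ℓ(a²)aR = R(a-a³)R as two-sided ideals of R. -/
noncomputable section

open Matrix in
lemma aux_span_top {α : Type*} [Ring α] (I : TwoSidedIdeal (Matrix (Fin 3) (Fin 3) α))
    (h : single (0:Fin 3) 1 (1:α) ∈ I) : I = ⊤ := by
  apply I.eq_top
  have hii : ∀ i : Fin 3, single i i (1:α) ∈ I := by
    intro i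
    have : single i i (1:α) =
        single i 0 1 * single (0:Fin 3) 1 (1:α) * single 1 i 1 := by
      rw [single_mul_single_same, single_mul_single_same, one_mul, one_mul]
    rw [this]
    exact I.mul_mem_right _ _ (I.mul_mem_left _ _ h)
  have h1 : (1 : Matrix (Fin 3) (Fin 3) α) =
      single 0 0 1 + single 1 1 1 + single 2 2 1 := by
    ext i j; fin_cases i <;> fin_cases j <;> simp [single, one_apply]
  rw [h1]
  exact I.add_mem (I.add_mem (hii 0) (hii 1)) (hii 2)

open SepExchange in
/-- Example 3.6: for an infinite-dimensional `ℤ/3`-vector space `V`,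
`R = M₃(End V)` and `a` the matrix with `a₁₂ = 1`, `a₃₃ = 1` and zeros
elsewhere, one has `a² = a³` and `Rar(a²) = ℓ(a²)aR = R(a-a³)R`. -/
theorem stmt19 (V : Type) [AddCommGroup V] [Module (ZMod 3) V]
    (hV : ¬ Module.Finite (ZMod 3) V)
    (a : Matrix (Fin 3) (Fin 3) (Module.End (ZMod 3) V))
    (ha : a = fun i j => if (i = 0 ∧ j = 1) ∨ (i = 2 ∧ j = 2) then 1 else 0) :
    a ^ 2 = a ^ 3 ∧
    TwoSidedIdeal.span
        {x : Matrix (Fin 3) (Fin 3) (Module.End (ZMod 3) V) |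
          ∃ t, x = a * t ∧ a ^ 2 * t = 0} =
      TwoSidedIdeal.span
        {x : Matrix (Fin 3) (Fin 3) (Module.End (ZMod 3) V) |
          ∃ u, x = u * a ∧ u * a ^ 2 = 0} ∧
    TwoSidedIdeal.span
        {x : Matrix (Fin 3) (Fin 3) (Module.End (ZMod 3) V) |
          ∃ u, x = u * a ∧ u * a ^ 2 = 0} =
      TwoSidedIdeal.span ({a - a ^ 3} :
        Set (Matrix (Fin 3) (Fin 3) (Module.End (ZMod 3) V))) := by
  have key : a ^ 2 = a ^ 3 ∧ a - a ^ 3 = Matrix.single 0 1 1 ∧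
      a * Matrix.single 1 1 1 = Matrix.single 0 1 1 ∧
      a ^ 2 * Matrix.single 1 1 1 = 0 ∧
      Matrix.single 0 0 1 * a = Matrix.single 0 1 1 ∧
      Matrix.single 0 0 1 * a ^ 2 = 0 := by
    obtain rfl : a = Matrix.of (fun i j : Fin 3 => if (i = 0 ∧ j = 1) ∨ (i = 2 ∧ j = 2) then
      (1 : Module.End (ZMod 3) V) else 0) := ha
    refine ⟨?_, ?_, ?_, ?_, ?_, ?_⟩ <;>
    · ext i j v
      fin_cases i <;> fin_cases j <;>
        simp [pow_succ, Matrix.mul_apply, Fin.sum_univ_three, Matrix.single]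
  obtain ⟨h23, hsub, hat, ha2t, hua, hua2⟩ := key
  have m1 : Matrix.single 0 1 (1 : Module.End (ZMod 3) V) ∈
      TwoSidedIdeal.span
        {x : Matrix (Fin 3) (Fin 3) (Module.End (ZMod 3) V) |
          ∃ t, x = a * t ∧ a ^ 2 * t = 0} :=
    TwoSidedIdeal.subset_span ⟨Matrix.single 1 1 1, hat.symm, ha2t⟩
  have m2 : Matrix.single 0 1 (1 : Module.End (ZMod 3) V) ∈
      TwoSidedIdeal.span
        {x : Matrix (Fin 3) (Fin 3) (Module.End (ZMod 3) V) |
          ∃ u, x = u * a ∧ u * a ^ 2 = 0} :=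
    TwoSidedIdeal.subset_span ⟨Matrix.single 0 0 1, hua.symm, hua2⟩
  have m3 : Matrix.single 0 1 (1 : Module.End (ZMod 3) V) ∈
      TwoSidedIdeal.span ({a - a ^ 3} :
        Set (Matrix (Fin 3) (Fin 3) (Module.End (ZMod 3) V))) := by
    rw [← hsub]; exact TwoSidedIdeal.subset_span rfl
  exact ⟨h23, by rw [aux_span_top _ m1, aux_span_top _ m2],
    by rw [aux_span_top _ m2, aux_span_top _ m3]⟩
end
end
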